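/- Consider a market with finite player set N and item set M, where each valuation v_i : 2^M → ℝ≥0 is monotone and α-submodular (α ≥ 1). Let p : M → ℝ≥0 and let (S_i)_{i∈N} be a full allocation of M such that for every player i: (i) S_i is strongly α-IR, i.e., α·v_i(T) ≥ p(T) for every T ⊆ S_i; and (ii) no beneficial addition exists, i.e., v_i(T | S_i) ≤ p(T) for every T ⊆ M∖S_i. Then Σ_i v_i(S_i) ≥ OPT/(1+α), where OPT is the maximum of Σ_i v_i(O_i) over all allocations (O_i). -/

import Mathlib

/-- Corollary: Kelso–Crawford gives a `(1+α)`-approximation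
for `α`-submodular valuations.  Each `v_i` is monotone and `α`-submodular
(`α ≥ 1`).  Suppose `(S_i)` is a full allocation and `p` a price vector such
that for every player `i`: (i) `S_i` is strongly `α`-IR (`α·v_i(T) ≥ p(T)` for
all `T ⊆ S_i`); and (ii) no beneficial addition exists
(`v_i(T | S_i) ≤ p(T)` for all `T ⊆ M ∖ S_i`).  Then
`Σ_i v_i(S_i) ≥ OPT/(1+α)`, i.e. the welfare of `(S_i)` is within a factor
`1+α` of the welfare of every allocation. -/
theorem kelso_crawford_alpha_submodular_welfare
    {N M : Type*} [Fintype N] [Fintype M] [DecidableEq M]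
    (α : ℝ) (hα : 1 ≤ α)
    (v : N → Finset M → ℝ)
    (hv : ∀ (i : N) (S : Finset M), 0 ≤ v i S)
    (hmono : ∀ (i : N) (S T : Finset M), S ⊆ T → v i S ≤ v i T)
    (hsub : ∀ (i : N) (S T : Finset M), S ⊆ T → ∀ j : M, j ∉ T →
      α * (v i (insert j S) - v i S) ≥ v i (insert j T) - v i T)
    (p : M → ℝ) (hp : ∀ j : M, 0 ≤ p j)
    (S : N → Finset M)
    (hdisj : ∀ i i' : N, i ≠ i' → Disjoint (S i) (S i'))
    (hfull : ∀ j : M, ∃ i : N, j ∈ S i)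
    (hIR : ∀ (i : N) (T : Finset M), T ⊆ S i → α * v i T ≥ ∑ j ∈ T, p j)
    (hnoadd : ∀ (i : N) (T : Finset M), Disjoint T (S i) →
      v i (T ∪ S i) - v i (S i) ≤ ∑ j ∈ T, p j) :
    ∀ O : N → Finset M, (∀ i i' : N, i ≠ i' → Disjoint (O i) (O i')) →
      ∑ i : N, v i (S i) ≥ (∑ i : N, v i (O i)) / (1 + α) := by
  intro O hO
  have hpos : (0:ℝ) < 1 + α := by linarith
  rw [ge_iff_le, div_le_iff₀ hpos]
  -- per-player bound
  have key : ∀ i : N, v i (O i) ≤ v i (S i) + ∑ j ∈ O i, p j := by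
    intro i
    have hd : Disjoint (O i \ S i) (S i) := Finset.sdiff_disjoint
    have h1 : v i (O i) ≤ v i ((O i \ S i) ∪ S i) := by
      apply hmono
      intro x hx
      by_cases hxs : x ∈ S i
      · exact Finset.mem_union_right _ hxs
      · exact Finset.mem_union_left _ (Finset.mem_sdiff.mpr ⟨hx, hxs⟩)
    have h2 := hnoadd i (O i \ S i) hd
    have h3 : ∑ j ∈ O i \ S i, p j ≤ ∑ j ∈ O i, p j :=
      Finset.sum_le_sum_of_subset_of_nonneg (Finset.sdiff_subset) (fun j _ _ => hp j)
    linarith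
  have hsumO : ∑ i : N, v i (O i) ≤ ∑ i : N, v i (S i) + ∑ i : N, ∑ j ∈ O i, p j := by
    calc ∑ i : N, v i (O i) ≤ ∑ i : N, (v i (S i) + ∑ j ∈ O i, p j) :=
          Finset.sum_le_sum (fun i _ => key i)
      _ = _ := Finset.sum_add_distrib
  -- prices of O bounded by total prices
  have hOsum : ∑ i : N, ∑ j ∈ O i, p j ≤ ∑ j : M, p j := by
    rw [← Finset.sum_biUnion (fun i _ i' _ hne => hO i i' hne)]
    exact Finset.sum_le_sum_of_subset_of_nonneg (Finset.subset_univ _) (fun j _ _ => hp j)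
  -- total prices equal sum over S
  have hSsum : ∑ j : M, p j = ∑ i : N, ∑ j ∈ S i, p j := by
    rw [← Finset.sum_biUnion (fun i _ i' _ hne => hdisj i i' hne)]
    apply Finset.sum_congr _ (fun _ _ => rfl)
    symm
    apply Finset.eq_univ_iff_forall.mpr
    intro j
    obtain ⟨i, hi⟩ := hfull j
    exact Finset.mem_biUnion.mpr ⟨i, Finset.mem_univ i, hi⟩
  have hSprice : ∑ i : N, ∑ j ∈ S i, p j ≤ α * ∑ i : N, v i (S i) := by
    rw [Finset.mul_sum]
    exact Finset.sum_le_sum (fun i _ => hIR i (S i) (le_refl _))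
  have := hsumO.trans (by linarith [hOsum, hSsum.le, hSprice] : ∑ i : N, v i (S i) + ∑ i : N, ∑ j ∈ O i, p j ≤ ∑ i : N, v i (S i) + α * ∑ i : N, v i (S i))
  linarith
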